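/- For any ε > 0 and η > e^ε, there is no randomized approval-based committee rule satisfying both ε-DP and the η-Condorcet criterion, assuming n is odd, n ≥ 3, and m ≥ k+1. -/
import Mathlib


open scoped Classical

noncomputable section

/-- A profile assigns to each of the `n` voters an approval ballot (a finite set of alternatives). -/
abbrev Profile (A : Type) (n : ℕ) := Fin n → Finset A

/-- Two profiles are neighboring if they differ in at most one voter's ballot. -/
def Neighboring {A : Type} {n : ℕ} (P P' : Profile A n) : Prop :=
  ∃ i : Fin n, ∀ j : Fin n, j ≠ i → P j = P' j

/-- `W'` Pareto-dominates `W` in profile `P`. -/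
def ParetoDom {A : Type} [DecidableEq A] {n : ℕ} (P : Profile A n) (W' W : Finset A) : Prop :=
  (∀ i, (W ∩ P i).card ≤ (W' ∩ P i).card) ∧ (∃ i, (W ∩ P i).card < (W' ∩ P i).card)

/-- The set of alternatives approved by every voter in `V`. -/
def commonApproved {A : Type} [Fintype A] {n : ℕ} (P : Profile A n) (V : Finset (Fin n)) :
    Finset A :=
  Finset.univ.filter (fun a => ∀ i ∈ V, a ∈ P i)

/-- `V` is an `ℓ`-cohesive group for `(P, k)`: `|V| ≥ ℓ·n/k` and `|⋂_{i∈V} P i| ≥ ℓ`. -/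
def Cohesive {A : Type} [Fintype A] {n : ℕ} (P : Profile A n) (k ℓ : ℕ)
    (V : Finset (Fin n)) : Prop :=
  ℓ * n ≤ V.card * k ∧ ℓ ≤ (commonApproved P V).card

/-- Committee `W` (of size `k`) satisfies justified representation for `(P, k)`. -/
def JRsat {A : Type} [Fintype A] [DecidableEq A] {n : ℕ} (P : Profile A n) (k : ℕ)
    (W : Finset A) : Prop :=
  W.card = k ∧ ∀ V : Finset (Fin n), Cohesive P k 1 V → ∃ i ∈ V, (P i ∩ W).Nonempty

/-- Committee `W` satisfies proportional justified representation for `(P, k)`. -/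
def PJRsat {A : Type} [Fintype A] [DecidableEq A] {n : ℕ} (P : Profile A n) (k : ℕ)
    (W : Finset A) : Prop :=
  W.card = k ∧ ∀ (ℓ : ℕ) (V : Finset (Fin n)), 1 ≤ ℓ → Cohesive P k ℓ V →
    ℓ ≤ (W ∩ V.biUnion P).card

/-- Committee `W` satisfies extended justified representation for `(P, k)`. -/
def EJRsat {A : Type} [Fintype A] [DecidableEq A] {n : ℕ} (P : Profile A n) (k : ℕ)
    (W : Finset A) : Prop :=
  W.card = k ∧ ∀ (ℓ : ℕ) (V : Finset (Fin n)), 1 ≤ ℓ → Cohesive P k ℓ V →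
    ∃ i ∈ V, ℓ ≤ (P i ∩ W).card

/-- `W` is a Condorcet committee for `(P, k)`: against every other size-`k` committee,
strictly more than half of the voters prefer `W`. -/
def CondorcetCommittee {A : Type} [Fintype A] [DecidableEq A] {n : ℕ} (P : Profile A n)
    (k : ℕ) (W : Finset A) : Prop :=
  W.card = k ∧ ∀ W' : Finset A, W'.card = k → W' ≠ W →
    n < 2 * (Finset.univ.filter
      (fun i : Fin n => (P i ∩ W').card < (P i ∩ W).card)).card

/-- A randomized approval-based committee (ABC) rule: for each profile and committee size `k`,
a probability distribution over the size-`k` committees. -/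
structure ABCRule (A : Type) [Fintype A] [DecidableEq A] (n : ℕ) where
  prob : Profile A n → ℕ → Finset A → ℝ
  nonneg : ∀ P k W, 0 ≤ prob P k W
  size_eq : ∀ P k W, prob P k W ≠ 0 → W.card = k
  sum_one : ∀ P k, k ≤ Fintype.card A →
    ∑ W ∈ Finset.univ.filter (fun W : Finset A => W.card = k), prob P k W = 1

variable {A : Type} [Fintype A] [DecidableEq A] {n : ℕ}

/-- ε-differential privacy at committee size `k`. -/
def DPAt (f : ABCRule A n) (k : ℕ) (ε : ℝ) : Prop :=
  ∀ (P P' : Profile A n) (W : Finset A),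
    Neighboring P P' → f.prob P k W ≤ Real.exp ε * f.prob P' k W

/-- ε-differential privacy: single-ballot changes alter each committee's winning
probability by a factor of at most `e^ε`. -/
def DP (f : ABCRule A n) (ε : ℝ) : Prop := ∀ k : ℕ, DPAt f k ε

/-- Neutrality: the rule commutes with permutations of the alternatives. -/
def Neutral (f : ABCRule A n) : Prop :=
  ∀ (σ : Equiv.Perm A) (P : Profile A n) (k : ℕ) (W : Finset A),
    f.prob (fun i => (P i).image σ) k (W.image σ) = f.prob P k W

/-- θ-JR: each JR committee wins with probability at least θ times that of each non-JR one. -/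
def ThetaJR (f : ABCRule A n) (θ : ℝ) : Prop :=
  ∀ (P : Profile A n) (k : ℕ) (W₁ W₂ : Finset A),
    JRsat P k W₁ → W₂.card = k → ¬ JRsat P k W₂ →
      θ * f.prob P k W₂ ≤ f.prob P k W₁

/-- ρ-PJR. -/
def RhoPJR (f : ABCRule A n) (ρ : ℝ) : Prop :=
  ∀ (P : Profile A n) (k : ℕ) (W₁ W₂ : Finset A),
    PJRsat P k W₁ → W₂.card = k → ¬ PJRsat P k W₂ →
      ρ * f.prob P k W₂ ≤ f.prob P k W₁

/-- κ-EJR. -/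
def KappaEJR (f : ABCRule A n) (κ : ℝ) : Prop :=
  ∀ (P : Profile A n) (k : ℕ) (W₁ W₂ : Finset A),
    EJRsat P k W₁ → W₂.card = k → ¬ EJRsat P k W₂ →
      κ * f.prob P k W₂ ≤ f.prob P k W₁

/-- Exact Condorcet criterion: whenever a Condorcet committee exists, it wins with
probability one. -/
def CondorcetCrit (f : ABCRule A n) : Prop :=
  ∀ (P : Profile A n) (k : ℕ) (W : Finset A),
    CondorcetCommittee P k W → f.prob P k W = 1

/-- η-Condorcet criterion. -/
def EtaCC (f : ABCRule A n) (η : ℝ) : Prop :=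
  ∀ (P : Profile A n) (k : ℕ) (Wc W : Finset A),
    CondorcetCommittee P k Wc → W.card = k → W ≠ Wc →
      η * f.prob P k W ≤ f.prob P k Wc

/-- Exact Pareto efficiency at committee size `k`: no committee in the support is
Pareto-dominated by another size-`k` committee. -/
def ParetoEffAt (f : ABCRule A n) (k : ℕ) : Prop :=
  ∀ (P : Profile A n) (W : Finset A), f.prob P k W ≠ 0 →
    ∀ W' : Finset A, W'.card = k → ¬ ParetoDom P W' W

/-- β-Pareto efficiency at committee size `k`. -/
def BetaPEAt (f : ABCRule A n) (k : ℕ) (β : ℝ) : Prop :=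
  ∀ (P : Profile A n) (W₁ W₂ : Finset A), W₁.card = k → W₂.card = k →
    ParetoDom P W₁ W₂ → β * f.prob P k W₂ ≤ f.prob P k W₁

/-- The approval voting score of a committee. -/
def AV (P : Profile A n) (W : Finset A) : ℕ := ∑ j, (P j ∩ W).card

/-- The set of size-`k` committees satisfying JR for `(P, k)`. -/
def JRset (P : Profile A n) (k : ℕ) : Finset (Finset A) :=
  Finset.univ.filter (fun W => JRsat P k W)


lemma aux_card_lt (n t : ℕ) (h : t ≤ n) (hn : 0 < n) :
    (Finset.univ.filter (fun i : Fin n => (i:ℕ) < t)).card = t := by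
  have : (Finset.univ.filter (fun i : Fin n => (i:ℕ) < t)).card = (Finset.range t).card := by
    apply Finset.card_nbij' (fun i : Fin n => (i : ℕ)) (fun j => (⟨j % n, Nat.mod_lt _ hn⟩ : Fin n))
    · intro a ha; simpa using (Finset.mem_filter.mp ha).2
    · intro a ha
      have := Finset.mem_range.mp ha
      simp only [Finset.mem_filter, Finset.mem_univ, true_and]
      simpa [Nat.mod_eq_of_lt (lt_of_lt_of_le this h)] using this
    · intro a ha
      simp [Nat.mod_eq_of_lt a.isLt]
    · intro a ha
      have := Finset.mem_range.mp ha
      simp [Nat.mod_eq_of_lt (lt_of_lt_of_le this h)]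
  simpa using this

/-- For ε > 0 and η > e^ε, no ABC rule satisfies both ε-DP and the
η-Condorcet criterion (assuming n odd, n ≥ 3, and m ≥ k + 1). -/
theorem dp_etaCC_upper (f : ABCRule A n) (ε η : ℝ) (hε : 0 < ε)
    (hη : Real.exp ε < η) (hodd : Odd n) (hn : 3 ≤ n)
    (k : ℕ) (hk : 0 < k) (hm : k + 1 ≤ Fintype.card A) :
    ¬ (DP f ε ∧ EtaCC f η) := by
  rintro ⟨hDP, hCC⟩
  obtain ⟨t, ht⟩ := hodd
  have htpos : 1 ≤ t := by omega
  have hnpos : 0 < n := by omega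
  obtain ⟨S, -, hScard⟩ := Finset.exists_subset_card_eq (s := (Finset.univ : Finset A)) (n := k + 1)
    (by simpa using hm)
  obtain ⟨a1, ha1, a2, ha2, hne12⟩ := Finset.one_lt_card.mp (by omega : 1 < S.card)
  set W1 : Finset A := S.erase a2 with hW1def
  set W2 : Finset A := S.erase a1 with hW2def
  have hW1card : W1.card = k := by rw [hW1def, Finset.card_erase_of_mem ha2, hScard]; omega
  have hW2card : W2.card = k := by rw [hW2def, Finset.card_erase_of_mem ha1, hScard]; omega
  have hW12 : W1 ≠ W2 := by
    intro h
    have h1 : a1 ∈ W1 := Finset.mem_erase.mpr ⟨hne12, ha1⟩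
    rw [h] at h1
    exact (Finset.mem_erase.mp h1).1 rfl
  set P : Profile A n := fun i => if (i:ℕ) < t + 1 then W1 else W2 with hPdef
  set P' : Profile A n := fun i => if (i:ℕ) < t then W1 else W2 with hP'def
  have hNbkey : ∀ j : Fin n, (j:ℕ) ≠ t → P j = P' j := by
    intro j hj
    simp only [hPdef, hP'def]
    by_cases hc : (j:ℕ) < t
    · rw [if_pos (by omega), if_pos hc]
    · rw [if_neg (by omega), if_neg hc]
  have hNb : Neighboring P P' :=
    ⟨⟨t, by omega⟩, fun j hj => hNbkey j (fun h => hj (Fin.ext h))⟩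
  have hNb' : Neighboring P' P :=
    ⟨⟨t, by omega⟩, fun j hj => (hNbkey j (fun h => hj (Fin.ext h))).symm⟩
  -- generic Condorcet lemma
  have hcond : ∀ (Q : Profile A n) (Wc : Finset A), Wc.card = k →
      t + 1 ≤ (Finset.univ.filter (fun i : Fin n => Q i = Wc)).card →
      CondorcetCommittee Q k Wc := by
    intro Q Wc hWc hcount
    refine ⟨hWc, fun W' hW' hne' => ?_⟩
    have hsub : (Finset.univ.filter fun i : Fin n => Q i = Wc) ⊆
        Finset.univ.filter fun i : Fin n => (Q i ∩ W').card < (Q i ∩ Wc).card := by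
      intro i hi
      simp only [Finset.mem_filter, Finset.mem_univ, true_and] at hi ⊢
      rw [hi, Finset.inter_self]
      apply Finset.card_lt_card
      refine ⟨Finset.inter_subset_left, fun hsub2 => ?_⟩
      have hWcW' : Wc ⊆ W' := fun x hx => (Finset.mem_inter.mp (hsub2 hx)).2
      exact hne' (Finset.eq_of_subset_of_card_le hWcW' (by rw [hW', hWc])).symm
    have := Finset.card_le_card hsub
    omega
  -- Condorcet committee for P
  have hc1 : CondorcetCommittee P k W1 := by
    apply hcond P W1 hW1card
    have hsub : (Finset.univ.filter fun i : Fin n => (i:ℕ) < t + 1) ⊆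
        Finset.univ.filter fun i : Fin n => P i = W1 := by
      intro i hi
      simp only [Finset.mem_filter, Finset.mem_univ, true_and] at hi ⊢
      simp only [hPdef]
      rw [if_pos hi]
    have := Finset.card_le_card hsub
    rw [aux_card_lt n (t+1) (by omega) hnpos] at this
    omega
  -- Condorcet committee for P'
  have hc2 : CondorcetCommittee P' k W2 := by
    apply hcond P' W2 hW2card
    have hsub : (Finset.univ.filter fun i : Fin n => ¬ ((i:ℕ) < t)) ⊆
        Finset.univ.filter fun i : Fin n => P' i = W2 := by
      intro i hi
      simp only [Finset.mem_filter, Finset.mem_univ, true_and] at hi ⊢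
      simp only [hP'def]
      rw [if_neg hi]
    have h1 := Finset.card_le_card hsub
    have h2 : (Finset.univ.filter fun i : Fin n => ¬ ((i:ℕ) < t)).card = n - t := by
      have := Finset.card_filter_add_card_filter_not
        (s := (Finset.univ : Finset (Fin n))) (p := fun i : Fin n => (i:ℕ) < t)
      rw [aux_card_lt n t (by omega) hnpos] at this
      simp only [Finset.card_univ, Fintype.card_fin] at this
      omega
    omega
  have e0 : (0:ℝ) < Real.exp ε := Real.exp_pos ε
  have hηpos : (0:ℝ) < η := lt_trans e0 hη
  have h1 : η * f.prob P k W2 ≤ f.prob P k W1 := hCC P k W1 W2 hc1 hW2card hW12.symm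
  have h2 : η * f.prob P' k W1 ≤ f.prob P' k W2 := hCC P' k W2 W1 hc2 hW1card hW12
  have h3 : f.prob P k W1 ≤ Real.exp ε * f.prob P' k W1 := hDP k P P' W1 hNb
  have h4 : f.prob P' k W2 ≤ Real.exp ε * f.prob P k W2 := hDP k P' P W2 hNb'
  have hpnn := f.nonneg P k W2
  have hp'nn := f.nonneg P' k W2
  have hq'nn := f.nonneg P' k W1
  have hqnn := f.nonneg P k W1
  have hp0 : f.prob P k W2 = 0 := by
    nlinarith [mul_le_mul_of_nonneg_left h3 hηpos.le, mul_le_mul_of_nonneg_left h2 e0.le,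
      mul_le_mul_of_nonneg_left h4 e0.le, mul_le_mul_of_nonneg_left h1 hηpos.le]
  have hp'0 : f.prob P' k W2 = 0 := by nlinarith
  have hq'0 : f.prob P' k W1 = 0 := by nlinarith
  have hq0 : f.prob P k W1 = 0 := by nlinarith
  have hsum := f.sum_one P k (le_trans (Nat.le_succ k) hm)
  rw [Finset.sum_eq_zero] at hsum
  · exact one_ne_zero hsum.symm
  · intro W hW
    have hWcard : W.card = k := (Finset.mem_filter.mp hW).2
    by_cases hWeq : W = W1
    · rw [hWeq]; exact hq0
    · have := hCC P k W1 W hc1 hWcard hWeq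
      rw [hq0] at this
      have hWnn := f.nonneg P k W
      rcases lt_or_eq_of_le hWnn with hpos | heq
      · exfalso
        have := mul_pos hηpos hpos
        linarith
      · exact heq.symm
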